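/- With the twisted GKLO operators κ_{i,k} as in the context: for all pairs (i,k) ≠ (j,l) (with i, j ∈ I, 1 ≤ k ≤ m_i, 1 ≤ l ≤ m_j), the following identity of ℂ-linear endomorphisms of F holds: M(γ_{i,k} − γ_{j,l} − ½ a_{ij} ℏ) ∘ κ_{i,k} ∘ κ_{j,l} = M(γ_{i,k} − γ_{j,l} + ½ a_{ij} ℏ) ∘ κ_{j,l} ∘ κ_{i,k}. -/
import Mathlib


/- Twisted GKLO representation setup (type AI).
   Indices: `i ∈ I = {1,…,n−1}`, `1 ≤ k ≤ m i`, with conventions `m 0 = m n = 0`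
   (and `lam 0 = lam n = 0`), so that the indeterminates are exactly
   `ℏ`, `γ_{i,k}` (`i ∈ I`, `1 ≤ k ≤ m i`), `r_{i,t}` (`i ∈ I`, `1 ≤ t ≤ lam i`). -/

noncomputable section

/-- The indexing type of the indeterminates: `ℏ`, the `γ_{i,k}` and the `r_{i,t}`. -/
abbrev GVar (n : ℕ) (m lam : ℕ → ℕ) : Type :=
  Unit ⊕ ((Σ i : Fin (n + 1), Fin (m i)) ⊕ (Σ i : Fin (n + 1), Fin (lam i)))

/-- `F`, the fraction field of the polynomial ring over `ℂ` in the indeterminates. -/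
abbrev GF (n : ℕ) (m lam : ℕ → ℕ) : Type :=
  FractionRing (MvPolynomial (GVar n m lam) ℂ)

/-- The indeterminate `ℏ`. -/
def hb (n : ℕ) (m lam : ℕ → ℕ) : GF n m lam :=
  algebraMap (MvPolynomial (GVar n m lam) ℂ) (GF n m lam) (MvPolynomial.X (Sum.inl ()))

/-- The indeterminate `γ_{i,k}` (for `1 ≤ k ≤ m i`, `i ≤ n`; junk value `0` otherwise). -/
def gam (n : ℕ) (m lam : ℕ → ℕ) (i k : ℕ) : GF n m lam :=
  if h : i < n + 1 ∧ k - 1 < m i then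
    algebraMap (MvPolynomial (GVar n m lam) ℂ) (GF n m lam)
      (MvPolynomial.X (Sum.inr (Sum.inl ⟨⟨i, h.1⟩, ⟨k - 1, h.2⟩⟩)))
  else 0

/-- The indeterminate `r_{i,t}` (for `1 ≤ t ≤ lam i`, `i ≤ n`; junk value `0` otherwise). -/
def rv (n : ℕ) (m lam : ℕ → ℕ) (i t : ℕ) : GF n m lam :=
  if h : i < n + 1 ∧ t - 1 < lam i then
    algebraMap (MvPolynomial (GVar n m lam) ℂ) (GF n m lam)
      (MvPolynomial.X (Sum.inr (Sum.inr ⟨⟨i, h.1⟩, ⟨t - 1, h.2⟩⟩)))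
  else 0

/-- `ξ_{i,k} = γ_{i,k} + ℏ`. -/
def xi (n : ℕ) (m lam : ℕ → ℕ) (i k : ℕ) : GF n m lam :=
  gam n m lam i k + hb n m lam

/-- `R_i(x) = ∏_{t=1}^{λ_i} (x² − r_{i,t}²)`. -/
def RR (n : ℕ) (m lam : ℕ → ℕ) (i : ℕ) (x : GF n m lam) : GF n m lam :=
  ∏ t ∈ Finset.Icc 1 (lam i), (x ^ 2 - rv n m lam i t ^ 2)

/-- The coefficient `c_{i,k}` of the twisted GKLO operator `κ_{i,k}`. -/
def cc (n : ℕ) (m lam : ℕ → ℕ) (i k : ℕ) : GF n m lam :=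
  ((∏ l ∈ Finset.Icc 1 (m (i + 1)),
      (gam n m lam i k ^ 2 - (gam n m lam (i + 1) l + hb n m lam / 2) ^ 2)) *
    ∏ l ∈ Finset.Icc 1 (m (i - 1)),
      (gam n m lam i k + gam n m lam (i - 1) l + hb n m lam / 2)) /
  (2 * (gam n m lam i k - hb n m lam / 2) *
    ∏ l ∈ (Finset.Icc 1 (m i)).erase k, (gam n m lam i k ^ 2 - gam n m lam i l ^ 2))

/-- The coefficient `c'_{i,k}` of the twisted GKLO operator `κ'_{i,k}`. -/
def cc' (n : ℕ) (m lam : ℕ → ℕ) (i k : ℕ) : GF n m lam :=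
  (RR n m lam i (xi n m lam i k) *
    ∏ l ∈ Finset.Icc 1 (m (i - 1)),
      (xi n m lam i k - gam n m lam (i - 1) l - hb n m lam / 2)) /
  (2 * (gam n m lam i k + 3 * hb n m lam / 2) *
    ∏ l ∈ (Finset.Icc 1 (m i)).erase k, (xi n m lam i k ^ 2 - xi n m lam i l ^ 2))

/-- `M(f)`, the multiplication operator `x ↦ f·x`, as a `ℂ`-linear endomorphism of `F`. -/
def Mop (n : ℕ) (m lam : ℕ → ℕ) (f : GF n m lam) : Module.End ℂ (GF n m lam) :=
  LinearMap.mulLeft ℂ f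

/-- `κ_{i,k} = M(c_{i,k}) ∘ σ⁻_{i,k}`, where `σ` is the family of automorphisms `σ⁻`. -/
def kap (n : ℕ) (m lam : ℕ → ℕ) (σ : ℕ → ℕ → (GF n m lam ≃ₐ[ℂ] GF n m lam))
    (i k : ℕ) : Module.End ℂ (GF n m lam) :=
  Mop n m lam (cc n m lam i k) * (σ i k).toLinearMap

/-- `κ'_{i,k} = M(c'_{i,k}) ∘ σ⁺_{i,k}`, where `σ` is the family of automorphisms `σ⁺`. -/
def kap' (n : ℕ) (m lam : ℕ → ℕ) (σ : ℕ → ℕ → (GF n m lam ≃ₐ[ℂ] GF n m lam))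
    (i k : ℕ) : Module.End ℂ (GF n m lam) :=
  Mop n m lam (cc' n m lam i k) * (σ i k).toLinearMap

/-- The Cartan matrix of `sl_n`: `a_{ii} = 2`, `a_{ij} = −1` if `|i−j|=1`, else `0`. -/
def cartan (i j : ℕ) : ℤ :=
  if i = j then 2 else if i + 1 = j ∨ j + 1 = i then -1 else 0

open MvPolynomial Finset in
theorem gamhb_ne (n : ℕ) (m lam : ℕ → ℕ) (i k j l : ℕ)
    (hin : i ≤ n) (hk : 1 ≤ k) (hk' : k ≤ m i)
    (hjn : j ≤ n) (hl : 1 ≤ l) (hl' : l ≤ m j)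
    (hne : (i, k) ≠ (j, l)) :
    gam n m lam i k - gam n m lam j l - hb n m lam ≠ 0 ∧
      gam n m lam i k - gam n m lam j l + hb n m lam ≠ 0 := by
  have c1 : i < n + 1 ∧ k - 1 < m i := ⟨by omega, by omega⟩
  have c2 : j < n + 1 ∧ l - 1 < m j := ⟨by omega, by omega⟩
  set va : GVar n m lam := Sum.inr (Sum.inl ⟨⟨i, c1.1⟩, ⟨k - 1, c1.2⟩⟩) with hva
  set vb : GVar n m lam := Sum.inr (Sum.inl ⟨⟨j, c2.1⟩, ⟨l - 1, c2.2⟩⟩) with hvb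
  set vc : GVar n m lam := Sum.inl () with hvc
  have e1 : gam n m lam i k = algebraMap (MvPolynomial (GVar n m lam) ℂ) (GF n m lam) (X va) := by
    rw [gam, dif_pos c1]
  have e2 : gam n m lam j l = algebraMap (MvPolynomial (GVar n m lam) ℂ) (GF n m lam) (X vb) := by
    rw [gam, dif_pos c2]
  have e3 : hb n m lam = algebraMap (MvPolynomial (GVar n m lam) ℂ) (GF n m lam) (X vc) := rfl
  have hvne : va ≠ vb := by
    rw [hva, hvb]
    simp only [ne_eq, Sum.inr.injEq, Sum.inl.injEq]
    intro hEq
    have hij : i = j := by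
      have := congrArg (fun z : (Σ i : Fin (n+1), Fin (m i)) => (z.1 : ℕ)) hEq
      simpa using this
    have hkl : k - 1 = l - 1 := by
      have := congrArg (fun z : (Σ i : Fin (n+1), Fin (m i)) => (z.2 : ℕ)) hEq
      simpa using this
    exact hne (by rw [Prod.mk.injEq]; exact ⟨hij, by omega⟩)
  have hba : vb ≠ va := hvne.symm
  have hca : vc ≠ va := by rw [hvc, hva]; simp
  have inj := IsFractionRing.injective (MvPolynomial (GVar n m lam) ℂ) (GF n m lam)
  constructor
  · rw [e1, e2, e3, ← map_sub, ← map_sub]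
    intro h0
    have hp0 : (X va - X vb - X vc : MvPolynomial (GVar n m lam) ℂ) = 0 :=
      inj (h0.trans (map_zero _).symm)
    have h2 := congrArg (eval fun v => if v = va then (1:ℂ) else 0) hp0
    simp only [map_sub, eval_X, map_zero, if_pos rfl, if_neg hba, if_neg hca] at h2
    norm_num at h2
  · rw [e1, e2, e3, ← map_sub, ← map_add]
    intro h0
    have hp0 : (X va - X vb + X vc : MvPolynomial (GVar n m lam) ℂ) = 0 :=
      inj (h0.trans (map_zero _).symm)
    have h2 := congrArg (eval fun v => if v = va then (1:ℂ) else 0) hp0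
    simp only [map_sub, map_add, eval_X, map_zero, if_pos rfl, if_neg hba, if_neg hca] at h2
    norm_num at h2
open MvPolynomial Finset in
theorem sig_comm (n : ℕ) (hn : 2 ≤ n) (m lam : ℕ → ℕ) (hm0 : m 0 = 0) (hmn : m n = 0)
    (i k j l : ℕ)
    (hi : 1 ≤ i) (hi' : i ≤ n - 1) (hk : 1 ≤ k) (hk' : k ≤ m i)
    (hj : 1 ≤ j) (hj' : j ≤ n - 1) (hl : 1 ≤ l) (hl' : l ≤ m j)
    (hne : (i, k) ≠ (j, l))
    (s t : GF n m lam ≃ₐ[ℂ] GF n m lam)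
    (hsh : s (hb n m lam) = hb n m lam) (hth : t (hb n m lam) = hb n m lam)
    (hsr : ∀ i' t', s (rv n m lam i' t') = rv n m lam i' t')
    (htr : ∀ i' t', t (rv n m lam i' t') = rv n m lam i' t')
    (hsg : ∀ i' k', 1 ≤ i' → i' ≤ n - 1 → 1 ≤ k' → k' ≤ m i' →
      s (gam n m lam i' k') =
        if i' = i ∧ k' = k then gam n m lam i k - hb n m lam else gam n m lam i' k')
    (htg : ∀ i' k', 1 ≤ i' → i' ≤ n - 1 → 1 ≤ k' → k' ≤ m i' →
      t (gam n m lam i' k') =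
        if i' = j ∧ k' = l then gam n m lam j l - hb n m lam else gam n m lam i' k')
    (x : GF n m lam) : s (t x) = t (s x) := by
  have hs' : ∀ r c, r ≤ n → 1 ≤ c → c ≤ m r →
      s (gam n m lam r c) =
        if r = i ∧ c = k then gam n m lam i k - hb n m lam else gam n m lam r c := by
    intro r c h1 h2 h3
    have hr0 : 1 ≤ r := by
      rcases Nat.eq_zero_or_pos r with h | h
      · subst h; rw [hm0] at h3; omega
      · exact h
    have hrn : r ≤ n - 1 := by
      rcases eq_or_lt_of_le h1 with h | h
      · subst h; rw [hmn] at h3; omega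
      · omega
    exact hsg r c hr0 hrn h2 h3
  have ht' : ∀ r c, r ≤ n → 1 ≤ c → c ≤ m r →
      t (gam n m lam r c) =
        if r = j ∧ c = l then gam n m lam j l - hb n m lam else gam n m lam r c := by
    intro r c h1 h2 h3
    have hr0 : 1 ≤ r := by
      rcases Nat.eq_zero_or_pos r with h | h
      · subst h; rw [hm0] at h3; omega
      · exact h
    have hrn : r ≤ n - 1 := by
      rcases eq_or_lt_of_le h1 with h | h
      · subst h; rw [hmn] at h3; omega
      · omega
    exact htg r c hr0 hrn h2 h3
  have hik : ¬(i = j ∧ k = l) := fun hc => hne (by rw [Prod.mk.injEq]; exact ⟨hc.1, hc.2⟩)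
  have key : ∀ r c, r ≤ n → 1 ≤ c → c ≤ m r →
      s (t (gam n m lam r c)) = t (s (gam n m lam r c)) := by
    intro r c h1 h2 h3
    rw [ht' r c h1 h2 h3, hs' r c h1 h2 h3]
    by_cases e1 : r = i ∧ c = k
    · have e2 : ¬(r = j ∧ c = l) := fun hc => hik ⟨by rw [← e1.1, hc.1], by rw [← e1.2, hc.2]⟩
      rw [if_neg e2, if_pos e1, hs' r c h1 h2 h3, if_pos e1, map_sub, hth,
        ht' i k (by omega) hk hk', if_neg hik]
    · by_cases e2 : r = j ∧ c = l
      · rw [if_pos e2, if_neg e1, map_sub, hsh, hs' j l (by omega) hl hl',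
          if_neg (fun hc => hik ⟨hc.1.symm, hc.2.symm⟩), ht' r c h1 h2 h3, if_pos e2]
      · rw [if_neg e1, if_neg e2, hs' r c h1 h2 h3, if_neg e1, ht' r c h1 h2 h3, if_neg e2]
  suffices h : (s.toAlgHom.toRingHom).comp t.toAlgHom.toRingHom
      = (t.toAlgHom.toRingHom).comp s.toAlgHom.toRingHom by
    have := RingHom.congr_fun h x
    simpa using this
  apply IsLocalization.ringHom_ext (nonZeroDivisors (MvPolynomial (GVar n m lam) ℂ))
  apply MvPolynomial.ringHom_ext
  · intro r
    have eC : (algebraMap (MvPolynomial (GVar n m lam) ℂ) (GF n m lam)) (C r)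
        = algebraMap ℂ (GF n m lam) r := by
      rw [IsScalarTower.algebraMap_apply ℂ (MvPolynomial (GVar n m lam) ℂ)]; rfl
    simp [RingHom.comp_apply, eC, AlgEquiv.commutes]
  · intro v
    simp only [RingHom.coe_comp, RingHom.comp_apply, Function.comp_apply,
      AlgHom.toRingHom_eq_coe, RingHom.coe_coe, AlgHom.coe_coe, AlgEquiv.coe_algHom]
    rcases v with ⟨⟩ | (⟨i', k'⟩ | ⟨i', t'⟩)
    · show s (t (hb n m lam)) = t (s (hb n m lam))
      simp only [hsh, hth]
    · have eg : (algebraMap (MvPolynomial (GVar n m lam) ℂ) (GF n m lam))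
          (X (Sum.inr (Sum.inl ⟨i', k'⟩))) = gam n m lam i'.val (k'.val + 1) := by
        rw [gam, dif_pos ⟨i'.isLt, by have := k'.isLt; omega⟩]
        rfl
      rw [eg]
      exact key i'.val (k'.val + 1) (by have := i'.isLt; omega) (by omega)
        (by have := k'.isLt; omega)
    · have er : (algebraMap (MvPolynomial (GVar n m lam) ℂ) (GF n m lam))
          (X (Sum.inr (Sum.inr ⟨i', t'⟩))) = rv n m lam i'.val (t'.val + 1) := by
        rw [rv, dif_pos ⟨i'.isLt, by have := t'.isLt; omega⟩]
        rfl
      rw [er]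
      simp only [hsr, htr]
instance gf_charZero (n : ℕ) (m lam : ℕ → ℕ) : CharZero (GF n m lam) :=
  charZero_of_injective_algebraMap
    (IsFractionRing.injective (MvPolynomial (GVar n m lam) ℂ) (GF n m lam))

theorem caseA_alg {F : Type*} [Field F] [CharZero F] (a b h A B dk dl : F)
    (h1 : a - b - h ≠ 0) (h2 : a - b + h ≠ 0) :
    (a - b - 2 * h / 2) * (A / (2 * (a - h / 2) * ((a ^ 2 - b ^ 2) * dk)))
        * (B / (2 * (b - h / 2) * ((b ^ 2 - (a - h) ^ 2) * dl)))
      = (a - b + 2 * h / 2) * (B / (2 * (b - h / 2) * ((b ^ 2 - a ^ 2) * dl)))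
        * (A / (2 * (a - h / 2) * ((a ^ 2 - (b - h) ^ 2) * dk))) := by
  have form : ∀ x p q r u : F, x * (p / q) * (r / u) = x * (p * r) / (q * u) := by
    intro x p q r u; rw [mul_assoc, div_mul_div_comm, ← mul_div_assoc]
  rw [form, form,
    show (a - b - 2*h/2) * (A * B) = (a - b - h) * (A * B) by ring,
    show 2 * (a - h/2) * ((a^2 - b^2) * dk) * (2 * (b - h/2) * ((b^2 - (a-h)^2) * dl))
        = (a - b - h) * (-(2 * (a - h/2) * dk * (2 * (b - h/2)) * dl * (a^2 - b^2) * (a + b - h))) by ring,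
    show (a - b + 2*h/2) * (B * A) = (a - b + h) * (A * B) by ring,
    show 2 * (b - h/2) * ((b^2 - a^2) * dl) * (2 * (a - h/2) * ((a^2 - (b-h)^2) * dk))
        = (a - b + h) * (-(2 * (a - h/2) * dk * (2 * (b - h/2)) * dl * (a^2 - b^2) * (a + b - h))) by ring,
    mul_div_mul_left _ _ h1, mul_div_mul_left _ _ h2]

set_option maxHeartbeats 2000000 in
theorem scalar_rel (n : ℕ) (hn : 2 ≤ n) (m lam : ℕ → ℕ) (hm0 : m 0 = 0) (hmn : m n = 0)
    (i k j l : ℕ)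
    (hi : 1 ≤ i) (hi' : i ≤ n - 1) (hk : 1 ≤ k) (hk' : k ≤ m i)
    (hj : 1 ≤ j) (hj' : j ≤ n - 1) (hl : 1 ≤ l) (hl' : l ≤ m j)
    (hne : (i, k) ≠ (j, l))
    (s t : GF n m lam ≃ₐ[ℂ] GF n m lam)
    (hsh : s (hb n m lam) = hb n m lam) (hth : t (hb n m lam) = hb n m lam)
    (hsg : ∀ i' k', 1 ≤ i' → i' ≤ n - 1 → 1 ≤ k' → k' ≤ m i' →
      s (gam n m lam i' k') =
        if i' = i ∧ k' = k then gam n m lam i k - hb n m lam else gam n m lam i' k')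
    (htg : ∀ i' k', 1 ≤ i' → i' ≤ n - 1 → 1 ≤ k' → k' ≤ m i' →
      t (gam n m lam i' k') =
        if i' = j ∧ k' = l then gam n m lam j l - hb n m lam else gam n m lam i' k') :
    (gam n m lam i k - gam n m lam j l - (cartan i j : GF n m lam) * hb n m lam / 2) *
        cc n m lam i k * s (cc n m lam j l) =
      (gam n m lam i k - gam n m lam j l + (cartan i j : GF n m lam) * hb n m lam / 2) *
        cc n m lam j l * t (cc n m lam i k) := by
  have hs' : ∀ r c, r ≤ n → 1 ≤ c → c ≤ m r →
      s (gam n m lam r c) =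
        if r = i ∧ c = k then gam n m lam i k - hb n m lam else gam n m lam r c := by
    intro r c h1 h2 h3
    have hr0 : 1 ≤ r := by
      rcases Nat.eq_zero_or_pos r with h | h
      · subst h; rw [hm0] at h3; omega
      · exact h
    have hrn : r ≤ n - 1 := by
      rcases eq_or_lt_of_le h1 with h | h
      · subst h; rw [hmn] at h3; omega
      · omega
    exact hsg r c hr0 hrn h2 h3
  have ht' : ∀ r c, r ≤ n → 1 ≤ c → c ≤ m r →
      t (gam n m lam r c) =
        if r = j ∧ c = l then gam n m lam j l - hb n m lam else gam n m lam r c := by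
    intro r c h1 h2 h3
    have hr0 : 1 ≤ r := by
      rcases Nat.eq_zero_or_pos r with h | h
      · subst h; rw [hm0] at h3; omega
      · exact h
    have hrn : r ≤ n - 1 := by
      rcases eq_or_lt_of_le h1 with h | h
      · subst h; rw [hmn] at h3; omega
      · omega
    exact htg r c hr0 hrn h2 h3
  have hin : i ≤ n := by omega
  have hjn : j ≤ n := by omega
  have fix : ∀ (S : Finset ℕ) (f : ℕ → GF n m lam) (u : GF n m lam ≃ₐ[ℂ] GF n m lam),
      (∀ x ∈ S, u (f x) = f x) → u (∏ x ∈ S, f x) = ∏ x ∈ S, f x := by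
    intro S f u h; rw [map_prod]; exact Finset.prod_congr rfl h
  have split : ∀ (S : Finset ℕ) (a : ℕ) (f : ℕ → GF n m lam)
      (u : GF n m lam ≃ₐ[ℂ] GF n m lam), a ∈ S → (∀ x ∈ S.erase a, u (f x) = f x) →
      u (∏ x ∈ S, f x) = u (f a) * ∏ x ∈ S.erase a, f x := by
    intro S a f u ha h
    rw [map_prod, ← Finset.mul_prod_erase S (fun x => u (f x)) ha]
    exact congrArg (fun y => u (f a) * y) (Finset.prod_congr rfl h)
  by_cases hij : i = j
  · -- Case A : i = j, k ≠ l
    subst hij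
    have hkl : k ≠ l := by simpa using hne
    obtain ⟨hne1, hne2⟩ := gamhb_ne n m lam i k i l hin hk hk' hin hl hl' hne
    have hkE : k ∈ (Finset.Icc 1 (m i)).erase l :=
      Finset.mem_erase.mpr ⟨hkl, Finset.mem_Icc.mpr ⟨hk, hk'⟩⟩
    have hlE : l ∈ (Finset.Icc 1 (m i)).erase k :=
      Finset.mem_erase.mpr ⟨fun h => hkl h.symm, Finset.mem_Icc.mpr ⟨hl, hl'⟩⟩
    have c1 : ¬(i = i ∧ l = k) := fun hc => hkl hc.2.symm
    have c2 : ¬(i = i ∧ k = l) := fun hc => hkl hc.2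
    have hlk : ¬(l = k) := fun hq => hkl hq.symm
    have hkl' : ¬(k = l) := hkl
    rw [show cartan i i = 2 from if_pos rfl]
    push_cast
    simp only [cc, map_div₀, map_mul, map_sub, map_ofNat, hsh, hth]
    rw [hs' i l hin hl hl', if_neg c1, ht' i k hin hk hk', if_neg c2]
    rw [fix (Finset.Icc 1 (m (i+1)))
        (fun x => gam n m lam i l ^ 2 - (gam n m lam (i+1) x + hb n m lam / 2) ^ 2) s (by
          intro x hx; rw [Finset.mem_Icc] at hx
          simp only [map_sub, map_pow, map_add, map_div₀, map_ofNat, hsh,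
            hs' (i+1) x (by omega) hx.1 hx.2, hs' i l hin hl hl',
            true_and, if_neg (show ¬(i+1 = i ∧ x = k) by omega), if_neg hlk]),
      fix (Finset.Icc 1 (m (i-1)))
        (fun x => gam n m lam i l + gam n m lam (i-1) x + hb n m lam / 2) s (by
          intro x hx; rw [Finset.mem_Icc] at hx
          simp only [map_add, map_div₀, map_ofNat, hsh,
            hs' (i-1) x (by omega) hx.1 hx.2, hs' i l hin hl hl',
            true_and, if_neg (show ¬(i-1 = i ∧ x = k) by omega), if_neg hlk]),
      fix (Finset.Icc 1 (m (i+1)))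
        (fun x => gam n m lam i k ^ 2 - (gam n m lam (i+1) x + hb n m lam / 2) ^ 2) t (by
          intro x hx; rw [Finset.mem_Icc] at hx
          simp only [map_sub, map_pow, map_add, map_div₀, map_ofNat, hth,
            ht' (i+1) x (by omega) hx.1 hx.2, ht' i k hin hk hk',
            true_and, if_neg (show ¬(i+1 = i ∧ x = l) by omega), if_neg hkl']),
      fix (Finset.Icc 1 (m (i-1)))
        (fun x => gam n m lam i k + gam n m lam (i-1) x + hb n m lam / 2) t (by
          intro x hx; rw [Finset.mem_Icc] at hx
          simp only [map_add, map_div₀, map_ofNat, hth,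
            ht' (i-1) x (by omega) hx.1 hx.2, ht' i k hin hk hk',
            true_and, if_neg (show ¬(i-1 = i ∧ x = l) by omega), if_neg hkl'])]
    rw [split ((Finset.Icc 1 (m i)).erase l) k
        (fun x => gam n m lam i l ^ 2 - gam n m lam i x ^ 2) s hkE (by
          intro x hx
          simp only [Finset.mem_erase, Finset.mem_Icc] at hx
          simp only [map_sub, map_pow, hs' i l hin hl hl', true_and, if_neg hlk,
            hs' i x hin hx.2.2.1 hx.2.2.2, if_neg hx.1]),
      split ((Finset.Icc 1 (m i)).erase k) l
        (fun x => gam n m lam i k ^ 2 - gam n m lam i x ^ 2) t hlE (by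
          intro x hx
          simp only [Finset.mem_erase, Finset.mem_Icc] at hx
          simp only [map_sub, map_pow, ht' i k hin hk hk', true_and, if_neg hkl',
            ht' i x hin hx.2.2.1 hx.2.2.2, if_neg hx.1])]
    simp only [map_sub, map_pow, hs' i l hin hl hl', hs' i k hin hk hk',
      ht' i k hin hk hk', ht' i l hin hl hl', true_and, if_true, if_neg hlk, if_neg hkl']
    rw [← Finset.mul_prod_erase ((Finset.Icc 1 (m i)).erase k)
        (fun x => gam n m lam i k ^ 2 - gam n m lam i x ^ 2) hlE,
      ← Finset.mul_prod_erase ((Finset.Icc 1 (m i)).erase l)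
        (fun x => gam n m lam i l ^ 2 - gam n m lam i x ^ 2) hkE]
    beta_reduce
    exact caseA_alg _ _ _ _ _ _ _ hne1 hne2
  · by_cases hji1 : j = i + 1
    · -- Case B : j = i + 1
      subst hji1
      have hkI : k ∈ Finset.Icc 1 (m i) := Finset.mem_Icc.mpr ⟨hk, hk'⟩
      have hlI : l ∈ Finset.Icc 1 (m (i+1)) := Finset.mem_Icc.mpr ⟨hl, hl'⟩
      rw [show cartan i (i+1) = -1 by rw [cartan, if_neg (by omega), if_pos (Or.inl rfl)]]
      push_cast
      simp only [cc, Nat.add_sub_cancel, map_div₀, map_mul, map_sub, map_ofNat, hsh, hth]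
      rw [hs' (i+1) l (by omega) hl hl', if_neg (show ¬(i+1 = i ∧ l = k) by omega),
        ht' i k hin hk hk', if_neg (show ¬(i = i+1 ∧ k = l) by omega)]
      rw [fix (Finset.Icc 1 (m (i+1+1)))
          (fun x => gam n m lam (i+1) l ^ 2 - (gam n m lam (i+1+1) x + hb n m lam / 2) ^ 2) s (by
            intro x hx; rw [Finset.mem_Icc] at hx
            simp only [map_sub, map_pow, map_add, map_div₀, map_ofNat, hsh,
              hs' (i+1+1) x (by omega) hx.1 hx.2, hs' (i+1) l (by omega) hl hl',
              if_neg (show ¬(i+1+1 = i ∧ x = k) by omega),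
              if_neg (show ¬(i+1 = i ∧ l = k) by omega)]),
        fix ((Finset.Icc 1 (m (i+1))).erase l)
          (fun x => gam n m lam (i+1) l ^ 2 - gam n m lam (i+1) x ^ 2) s (by
            intro x hx
            simp only [Finset.mem_erase, Finset.mem_Icc] at hx
            simp only [map_sub, map_pow, hs' (i+1) l (by omega) hl hl',
              hs' (i+1) x (by omega) hx.2.1 hx.2.2,
              if_neg (show ¬(i+1 = i ∧ l = k) by omega),
              if_neg (show ¬(i+1 = i ∧ x = k) by omega)]),
        fix (Finset.Icc 1 (m (i-1)))
          (fun x => gam n m lam i k + gam n m lam (i-1) x + hb n m lam / 2) t (by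
            intro x hx; rw [Finset.mem_Icc] at hx
            simp only [map_add, map_div₀, map_ofNat, hth,
              ht' (i-1) x (by omega) hx.1 hx.2, ht' i k hin hk hk',
              if_neg (show ¬(i-1 = i+1 ∧ x = l) by omega),
              if_neg (show ¬(i = i+1 ∧ k = l) by omega)]),
        fix ((Finset.Icc 1 (m i)).erase k)
          (fun x => gam n m lam i k ^ 2 - gam n m lam i x ^ 2) t (by
            intro x hx
            simp only [Finset.mem_erase, Finset.mem_Icc] at hx
            simp only [map_sub, map_pow, ht' i k hin hk hk',
              ht' i x hin hx.2.1 hx.2.2,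
              if_neg (show ¬(i = i+1 ∧ k = l) by omega),
              if_neg (show ¬(i = i+1 ∧ x = l) by omega)])]
      rw [split (Finset.Icc 1 (m i)) k
          (fun x => gam n m lam (i+1) l + gam n m lam i x + hb n m lam / 2) s hkI (by
            intro x hx
            simp only [Finset.mem_erase, Finset.mem_Icc] at hx
            simp only [map_add, map_div₀, map_ofNat, hsh,
              hs' (i+1) l (by omega) hl hl', hs' i x hin hx.2.1 hx.2.2,
              true_and, if_neg (show ¬(i+1 = i ∧ l = k) by omega), if_neg hx.1]),
        split (Finset.Icc 1 (m (i+1))) l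
          (fun x => gam n m lam i k ^ 2 - (gam n m lam (i+1) x + hb n m lam / 2) ^ 2) t hlI (by
            intro x hx
            simp only [Finset.mem_erase, Finset.mem_Icc] at hx
            simp only [map_sub, map_pow, map_add, map_div₀, map_ofNat, hth,
              ht' i k hin hk hk', ht' (i+1) x (by omega) hx.2.1 hx.2.2,
              true_and, if_neg (show ¬(i = i+1 ∧ k = l) by omega), if_neg hx.1])]
      simp only [map_sub, map_pow, map_add, map_div₀, map_ofNat, hsh, hth,
        hs' (i+1) l (by omega) hl hl', hs' i k hin hk hk',
        ht' i k hin hk hk', ht' (i+1) l (by omega) hl hl',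
        true_and, if_true, if_neg (show ¬(i+1 = i ∧ l = k) by omega),
        if_neg (show ¬(i = i+1 ∧ k = l) by omega)]
      rw [← Finset.mul_prod_erase (Finset.Icc 1 (m (i+1)))
          (fun x => gam n m lam i k ^ 2 - (gam n m lam (i+1) x + hb n m lam / 2) ^ 2) hlI,
        ← Finset.mul_prod_erase (Finset.Icc 1 (m i))
          (fun x => gam n m lam (i+1) l + gam n m lam i x + hb n m lam / 2) hkI]
      beta_reduce
      ring
    · by_cases hij1 : i = j + 1
      · -- Case C : i = j + 1
        subst hij1
        have hkI : k ∈ Finset.Icc 1 (m (j+1)) := Finset.mem_Icc.mpr ⟨hk, hk'⟩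
        have hlI : l ∈ Finset.Icc 1 (m j) := Finset.mem_Icc.mpr ⟨hl, hl'⟩
        rw [show cartan (j+1) j = -1 by rw [cartan, if_neg (by omega), if_pos (Or.inr rfl)]]
        push_cast
        simp only [cc, Nat.add_sub_cancel, map_div₀, map_mul, map_sub, map_ofNat, hsh, hth]
        rw [hs' j l hjn hl hl', if_neg (show ¬(j = j+1 ∧ l = k) by omega),
          ht' (j+1) k (by omega) hk hk', if_neg (show ¬(j+1 = j ∧ k = l) by omega)]
        rw [fix (Finset.Icc 1 (m (j-1)))
            (fun x => gam n m lam j l + gam n m lam (j-1) x + hb n m lam / 2) s (by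
              intro x hx; rw [Finset.mem_Icc] at hx
              simp only [map_add, map_div₀, map_ofNat, hsh,
                hs' (j-1) x (by omega) hx.1 hx.2, hs' j l hjn hl hl',
                if_neg (show ¬(j-1 = j+1 ∧ x = k) by omega),
                if_neg (show ¬(j = j+1 ∧ l = k) by omega)]),
          fix ((Finset.Icc 1 (m j)).erase l)
            (fun x => gam n m lam j l ^ 2 - gam n m lam j x ^ 2) s (by
              intro x hx
              simp only [Finset.mem_erase, Finset.mem_Icc] at hx
              simp only [map_sub, map_pow, hs' j l hjn hl hl',
                hs' j x hjn hx.2.1 hx.2.2,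
                if_neg (show ¬(j = j+1 ∧ l = k) by omega),
                if_neg (show ¬(j = j+1 ∧ x = k) by omega)]),
          fix (Finset.Icc 1 (m (j+1+1)))
            (fun x => gam n m lam (j+1) k ^ 2 - (gam n m lam (j+1+1) x + hb n m lam / 2) ^ 2) t (by
              intro x hx; rw [Finset.mem_Icc] at hx
              simp only [map_sub, map_pow, map_add, map_div₀, map_ofNat, hth,
                ht' (j+1+1) x (by omega) hx.1 hx.2, ht' (j+1) k (by omega) hk hk',
                if_neg (show ¬(j+1+1 = j ∧ x = l) by omega),
                if_neg (show ¬(j+1 = j ∧ k = l) by omega)]),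
          fix ((Finset.Icc 1 (m (j+1))).erase k)
            (fun x => gam n m lam (j+1) k ^ 2 - gam n m lam (j+1) x ^ 2) t (by
              intro x hx
              simp only [Finset.mem_erase, Finset.mem_Icc] at hx
              simp only [map_sub, map_pow, ht' (j+1) k (by omega) hk hk',
                ht' (j+1) x (by omega) hx.2.1 hx.2.2,
                if_neg (show ¬(j+1 = j ∧ k = l) by omega),
                if_neg (show ¬(j+1 = j ∧ x = l) by omega)])]
        rw [split (Finset.Icc 1 (m (j+1))) k
            (fun x => gam n m lam j l ^ 2 - (gam n m lam (j+1) x + hb n m lam / 2) ^ 2) s hkI (by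
              intro x hx
              simp only [Finset.mem_erase, Finset.mem_Icc] at hx
              simp only [map_sub, map_pow, map_add, map_div₀, map_ofNat, hsh,
                hs' j l hjn hl hl', hs' (j+1) x (by omega) hx.2.1 hx.2.2,
                true_and, if_neg (show ¬(j = j+1 ∧ l = k) by omega), if_neg hx.1]),
          split (Finset.Icc 1 (m j)) l
            (fun x => gam n m lam (j+1) k + gam n m lam j x + hb n m lam / 2) t hlI (by
              intro x hx
              simp only [Finset.mem_erase, Finset.mem_Icc] at hx
              simp only [map_add, map_div₀, map_ofNat, hth,
                ht' (j+1) k (by omega) hk hk', ht' j x hjn hx.2.1 hx.2.2,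
                true_and, if_neg (show ¬(j+1 = j ∧ k = l) by omega), if_neg hx.1])]
        simp only [map_sub, map_pow, map_add, map_div₀, map_ofNat, hsh, hth,
          hs' (j+1) k (by omega) hk hk', hs' j l hjn hl hl',
          ht' j l hjn hl hl', ht' (j+1) k (by omega) hk hk',
          true_and, if_true, if_neg (show ¬(j = j+1 ∧ l = k) by omega),
          if_neg (show ¬(j+1 = j ∧ k = l) by omega)]
        rw [← Finset.mul_prod_erase (Finset.Icc 1 (m j))
            (fun x => gam n m lam (j+1) k + gam n m lam j x + hb n m lam / 2) hlI,
          ← Finset.mul_prod_erase (Finset.Icc 1 (m (j+1)))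
            (fun x => gam n m lam j l ^ 2 - (gam n m lam (j+1) x + hb n m lam / 2) ^ 2) hkI]
        beta_reduce
        ring
      · -- Case D : |i - j| ≥ 2
        rw [show cartan i j = 0 by rw [cartan, if_neg hij, if_neg (by omega)]]
        push_cast
        simp only [cc, map_div₀, map_mul, map_sub, map_ofNat, hsh, hth]
        rw [hs' j l hjn hl hl', if_neg (show ¬(j = i ∧ l = k) by omega),
          ht' i k hin hk hk', if_neg (show ¬(i = j ∧ k = l) by omega)]
        rw [fix (Finset.Icc 1 (m (j+1)))
            (fun x => gam n m lam j l ^ 2 - (gam n m lam (j+1) x + hb n m lam / 2) ^ 2) s (by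
              intro x hx; rw [Finset.mem_Icc] at hx
              simp only [map_sub, map_pow, map_add, map_div₀, map_ofNat, hsh,
                hs' (j+1) x (by omega) hx.1 hx.2, hs' j l hjn hl hl',
                if_neg (show ¬(j+1 = i ∧ x = k) by omega),
                if_neg (show ¬(j = i ∧ l = k) by omega)]),
          fix (Finset.Icc 1 (m (j-1)))
            (fun x => gam n m lam j l + gam n m lam (j-1) x + hb n m lam / 2) s (by
              intro x hx; rw [Finset.mem_Icc] at hx
              simp only [map_add, map_div₀, map_ofNat, hsh,
                hs' (j-1) x (by omega) hx.1 hx.2, hs' j l hjn hl hl',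
                if_neg (show ¬(j-1 = i ∧ x = k) by omega),
                if_neg (show ¬(j = i ∧ l = k) by omega)]),
          fix ((Finset.Icc 1 (m j)).erase l)
            (fun x => gam n m lam j l ^ 2 - gam n m lam j x ^ 2) s (by
              intro x hx
              simp only [Finset.mem_erase, Finset.mem_Icc] at hx
              simp only [map_sub, map_pow, hs' j l hjn hl hl',
                hs' j x hjn hx.2.1 hx.2.2,
                if_neg (show ¬(j = i ∧ l = k) by omega),
                if_neg (show ¬(j = i ∧ x = k) by omega)]),
          fix (Finset.Icc 1 (m (i+1)))
            (fun x => gam n m lam i k ^ 2 - (gam n m lam (i+1) x + hb n m lam / 2) ^ 2) t (by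
              intro x hx; rw [Finset.mem_Icc] at hx
              simp only [map_sub, map_pow, map_add, map_div₀, map_ofNat, hth,
                ht' (i+1) x (by omega) hx.1 hx.2, ht' i k hin hk hk',
                if_neg (show ¬(i+1 = j ∧ x = l) by omega),
                if_neg (show ¬(i = j ∧ k = l) by omega)]),
          fix (Finset.Icc 1 (m (i-1)))
            (fun x => gam n m lam i k + gam n m lam (i-1) x + hb n m lam / 2) t (by
              intro x hx; rw [Finset.mem_Icc] at hx
              simp only [map_add, map_div₀, map_ofNat, hth,
                ht' (i-1) x (by omega) hx.1 hx.2, ht' i k hin hk hk',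
                if_neg (show ¬(i-1 = j ∧ x = l) by omega),
                if_neg (show ¬(i = j ∧ k = l) by omega)]),
          fix ((Finset.Icc 1 (m i)).erase k)
            (fun x => gam n m lam i k ^ 2 - gam n m lam i x ^ 2) t (by
              intro x hx
              simp only [Finset.mem_erase, Finset.mem_Icc] at hx
              simp only [map_sub, map_pow, ht' i k hin hk hk',
                ht' i x hin hx.2.1 hx.2.2,
                if_neg (show ¬(i = j ∧ k = l) by omega),
                if_neg (show ¬(i = j ∧ x = l) by omega)])]
        ring
theorem gklo_kappa_kappa_relation (n : ℕ) (hn : 2 ≤ n) (m lam : ℕ → ℕ)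
    (hm0 : m 0 = 0) (hmn : m n = 0) (hlam0 : lam 0 = 0) (hlamn : lam n = 0)
    (σm σp : ℕ → ℕ → (GF n m lam ≃ₐ[ℂ] GF n m lam))
    (hσmh : ∀ i k, σm i k (hb n m lam) = hb n m lam)
    (hσph : ∀ i k, σp i k (hb n m lam) = hb n m lam)
    (hσmr : ∀ i k i' t, σm i k (rv n m lam i' t) = rv n m lam i' t)
    (hσpr : ∀ i k i' t, σp i k (rv n m lam i' t) = rv n m lam i' t)
    (hσmg : ∀ i k i' k', 1 ≤ i' → i' ≤ n - 1 → 1 ≤ k' → k' ≤ m i' →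
      σm i k (gam n m lam i' k') =
        if i' = i ∧ k' = k then gam n m lam i k - hb n m lam else gam n m lam i' k')
    (hσpg : ∀ i k i' k', 1 ≤ i' → i' ≤ n - 1 → 1 ≤ k' → k' ≤ m i' →
      σp i k (gam n m lam i' k') =
        if i' = i ∧ k' = k then gam n m lam i k + hb n m lam else gam n m lam i' k')
    (i k j l : ℕ)
    (hi : 1 ≤ i) (hi' : i ≤ n - 1) (hk : 1 ≤ k) (hk' : k ≤ m i)
    (hj : 1 ≤ j) (hj' : j ≤ n - 1) (hl : 1 ≤ l) (hl' : l ≤ m j)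
    (hne : (i, k) ≠ (j, l)) :
    Mop n m lam (gam n m lam i k - gam n m lam j l - (cartan i j : GF n m lam) * hb n m lam / 2) *
        kap n m lam σm i k * kap n m lam σm j l =
      Mop n m lam (gam n m lam i k - gam n m lam j l + (cartan i j : GF n m lam) * hb n m lam / 2) *
        kap n m lam σm j l * kap n m lam σm i k := by

  have hcomm : ∀ x, σm i k (σm j l x) = σm j l (σm i k x) :=
    sig_comm n hn m lam hm0 hmn i k j l hi hi' hk hk' hj hj' hl hl' hne
      (σm i k) (σm j l) (hσmh i k) (hσmh j l) (hσmr i k) (hσmr j l) (hσmg i k) (hσmg j l)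
  have hscal := scalar_rel n hn m lam hm0 hmn i k j l hi hi' hk hk' hj hj' hl hl' hne
    (σm i k) (σm j l) (hσmh i k) (hσmh j l) (hσmg i k) (hσmg j l)
  ext x
  simp only [kap, Mop, Module.End.mul_apply, LinearMap.mulLeft_apply,
    AlgEquiv.toLinearMap_apply, map_mul]
  rw [hcomm x]
  linear_combination (σm j l) ((σm i k) x) * hscal
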